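/- Let 0→h→ĝ→g→0 be a non-abelian extension with two sections s₁, s₂ of p, with corresponding non-abelian 3-cocycles (ω₁,θ₁,ρ₁) and (ω₂,θ₂,ρ₂). Then these two 3-cocycles are equivalent via the linear map φ(x)=s₂(x)−s₁(x): g→h. -/
import Mathlib


universe u v w

/-- A Lie triple system over a field `k`. -/
structure LTS (k : Type u) (V : Type v) [Field k] [AddCommGroup V] [Module k V] where
  t : V →ₗ[k] V →ₗ[k] V →ₗ[k] V
  alt : ∀ x y, t x x y = 0
  cyc : ∀ x y z, t x y z + t y z x + t z x y = 0
  leib : ∀ a b x y z, t a b (t x y z) =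
    t (t a b x) y z + t x (t a b y) z + t x y (t a b z)

/-- `D_θ(x,y) a = θ(y,x) a - θ(x,y) a`. -/
def Dmap {G H : Type*} [AddCommGroup H] (θ : G → G → H → H) (x y : G) (a : H) : H :=
  θ y x a - θ x y a

/-- `D_ρ(x)(a,b) = ρ(x)(b,a) - ρ(x)(a,b)`. -/
def Drho {G H : Type*} [AddCommGroup H] (ρ : G → H → H → H) (x : G) (a b : H) : H :=
  ρ x b a - ρ x a b

/-- A non-abelian 3-cocycle on `g` with values in `h`: identities (3.2)–(3.14) of the paper,
together with the wedge conditions on `ω`, `θ`, `ρ`. -/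
def IsNACocycle {G H : Type*} [AddCommGroup H]
    (tg : G → G → G → G) (th : H → H → H → H)
    (ω : G → G → G → H) (θ : G → G → H → H) (ρ : G → H → H → H) : Prop :=
  (∀ x y, ω x x y = 0) ∧
  (∀ x a, θ x x a = 0) ∧
  (∀ x a, ρ x a a = 0) ∧
  (∀ x y z, ω x y z + ω y z x + ω z x y = 0) ∧
  (∀ x1 x2 y1 y2 y3,
    Dmap θ x1 x2 (ω y1 y2 y3) + ω x1 x2 (tg y1 y2 y3) =
      ω (tg x1 x2 y1) y2 y3 + θ y2 y3 (ω x1 x2 y1)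
      + ω y1 (tg x1 x2 y2) y3 - θ y1 y3 (ω x1 x2 y2)
      + ω y1 y2 (tg x1 x2 y3) + Dmap θ y1 y2 (ω x1 x2 y3)) ∧
  (∀ x y z w a,
    Dmap θ x y (θ z w a) - θ z w (Dmap θ x y a) =
      θ (tg x y z) w a + θ z (tg x y w) a
      - Drho ρ w (ω x y z) a - ρ z a (ω x y w)) ∧
  (∀ x y z w a,
    θ x (tg y z w) a - ρ x a (ω y z w) =
      θ z w (θ x y a) - θ y w (θ x z a) + Dmap θ y z (θ x w a)) ∧
  (∀ x y z a b,
    Dmap θ x y (ρ z a b) =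
      ρ z (Dmap θ x y a) b + ρ (tg x y z) a b + th (ω x y z) a b
      + ρ z a (Dmap θ x y b)) ∧
  (∀ x y z a b,
    Dmap θ y z (ρ x a b) =
      ρ x a (Dmap θ y z b) - ρ z (θ x y a) b + ρ y (θ x z a) b) ∧
  (∀ x y z a b,
    θ y z (ρ x a b) =
      ρ x a (θ y z b) - Drho ρ z (θ x y a) b - ρ y b (θ x z a)) ∧
  (∀ x y a b c,
    Dmap θ x y (th a b c) =
      th (Dmap θ x y a) b c + th a (Dmap θ x y b) c + th a b (Dmap θ x y c)) ∧
  (∀ x y a b c,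
    ρ x a (ρ y b c) =
      ρ y (ρ x a b) c + ρ y b (ρ x a c) - th (θ x y a) b c) ∧
  (∀ x y a b c,
    th a b (θ x y c) =
      θ x y (th a b c) - Drho ρ y (Drho ρ x a b) c - ρ x c (Drho ρ y a b)) ∧
  (∀ x a b c d,
    th a b (ρ x c d) =
      ρ x (th a b c) d - th c (Drho ρ x a b) d + ρ x c (th a b d)) ∧
  (∀ x a b c d,
    ρ x a (th b c d) =
      th (ρ x a b) c d + th b (ρ x a c) d + th b c (ρ x a d))

/-- The bracket `[x+a, y+b, z+c]_{(ω,θ,ρ)}` on `g ⊕ h`. -/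
def nabBr {G H : Type*} [AddCommGroup H]
    (tg : G → G → G → G) (th : H → H → H → H)
    (ω : G → G → G → H) (θ : G → G → H → H) (ρ : G → H → H → H) :
    G × H → G × H → G × H → G × H :=
  fun p q r =>
    (tg p.1 q.1 r.1,
      ω p.1 q.1 r.1 + Dmap θ p.1 q.1 r.2 + θ q.1 r.1 p.2 - θ p.1 r.1 q.2
        + Drho ρ r.1 p.2 q.2 + ρ p.1 q.2 r.2 - ρ q.1 p.2 r.2 + th p.2 q.2 r.2)

/-- Equivalence of two non-abelian 3-cocycles via `φ : g → h`
(equations (3.15)–(3.17) of the paper). -/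
def CocycleEquiv {G H : Type*} [AddCommGroup H]
    (tg : G → G → G → G) (th : H → H → H → H)
    (ω1 : G → G → G → H) (θ1 : G → G → H → H) (ρ1 : G → H → H → H)
    (ω2 : G → G → G → H) (θ2 : G → G → H → H) (ρ2 : G → H → H → H)
    (φ : G → H) : Prop :=
  (∀ x y z,
    ω1 x y z - ω2 x y z =
      θ2 x z (φ y) - Dmap θ2 x y (φ z) + ρ2 x (φ y) (φ z) - θ2 y z (φ x)
        + Drho ρ2 z (φ x) (φ y) - ρ2 y (φ x) (φ z)
        - th (φ x) (φ y) (φ z) + φ (tg x y z)) ∧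
  (∀ x y a,
    θ1 x y a - θ2 x y a =
      ρ2 x a (φ y) - Drho ρ2 y a (φ x) + th a (φ x) (φ y)) ∧
  (∀ x a b, ρ1 x a b - ρ2 x a b = th a (φ x) b)

/-- The operation `i_f(g)` on degree-one cochains (from equations (4.2)–(4.4)). -/
def ibrack {M : Type*} [AddCommGroup M] (f g : M → M → M → M) :
    M → M → M → M → M → M :=
  fun x1 y1 x2 y2 z =>
    f (g x1 y1 x2) y2 z + f x2 (g x1 y1 y2) z
      - (f x1 y1 (g x2 y2 z) - f x2 y2 (g x1 y1 z))

/-- The graded bracket `[f,g]_{Lts} = (-1)^{1·1} i_f(g) - i_g(f)` of two degree-one cochains. -/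
def brLts {M : Type*} [AddCommGroup M] (f g : M → M → M → M) :
    M → M → M → M → M → M :=
  fun x1 y1 x2 y2 z =>
    -(ibrack f g x1 y1 x2 y2 z) - ibrack g f x1 y1 x2 y2 z

/-- Non-abelian 1-cocycles on `g` with values in `h`. -/
def IsZ1 {G H : Type*} [AddCommGroup H]
    (tg : G → G → G → G) (th : H → H → H → H)
    (θ : G → G → H → H) (ρ : G → H → H → H) (φ : G → H) : Prop :=
  (∀ x a b, th a (φ x) b = 0) ∧
  (∀ x y a, th a (φ x) (φ y) - Drho ρ y a (φ x) + ρ x a (φ y) = 0) ∧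
  (∀ x y z,
    Drho ρ z (φ x) (φ y) - ρ y (φ x) (φ z) - θ y z (φ x)
      + ρ x (φ y) (φ z) + θ x z (φ y) - Dmap θ x y (φ z)
      = th (φ x) (φ y) (φ z) - φ (tg x y z))

/-- the non-abelian 3-cocycles `(ω₁,θ₁,ρ₁)` and `(ω₂,θ₂,ρ₂)` induced by two
sections `s₁, s₂` of the same non-abelian extension are equivalent via `φ(x) = s₂ x - s₁ x`. -/
theorem statement6 {k G H E : Type*} [Field k] [AddCommGroup G] [Module k G]
    [AddCommGroup H] [Module k H] [AddCommGroup E] [Module k E]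
    (Lg : LTS k G) (Lh : LTS k H) (LE : LTS k E)
    (i : H →ₗ[k] E) (p : E →ₗ[k] G)
    (ihom : ∀ a b c, i (Lh.t a b c) = LE.t (i a) (i b) (i c))
    (phom : ∀ x y z, p (LE.t x y z) = Lg.t (p x) (p y) (p z))
    (iinj : Function.Injective i) (psurj : Function.Surjective p)
    (hexact : LinearMap.range i = LinearMap.ker p)
    (s1 s2 : G →ₗ[k] E) (hs1 : ∀ x, p (s1 x) = x) (hs2 : ∀ x, p (s2 x) = x)
    (ω1 : G → G → G → H) (θ1 : G → G → H → H) (ρ1 : G → H → H → H)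
    (hω1 : ∀ x y z, i (ω1 x y z) = LE.t (s1 x) (s1 y) (s1 z) - s1 (Lg.t x y z))
    (hθ1 : ∀ x y a, i (θ1 x y a) = LE.t (i a) (s1 x) (s1 y))
    (hρ1 : ∀ x a b, i (ρ1 x a b) = LE.t (s1 x) (i a) (i b))
    (ω2 : G → G → G → H) (θ2 : G → G → H → H) (ρ2 : G → H → H → H)
    (hω2 : ∀ x y z, i (ω2 x y z) = LE.t (s2 x) (s2 y) (s2 z) - s2 (Lg.t x y z))
    (hθ2 : ∀ x y a, i (θ2 x y a) = LE.t (i a) (s2 x) (s2 y))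
    (hρ2 : ∀ x a b, i (ρ2 x a b) = LE.t (s2 x) (i a) (i b))
    (φ : G → H) (hφ : ∀ x, i (φ x) = s2 x - s1 x) :
    CocycleEquiv (fun x y z => Lg.t x y z) (fun a b c => Lh.t a b c)
      ω1 θ1 ρ1 ω2 θ2 ρ2 φ := by
  have hskew : ∀ x y z : E, LE.t y x z = -LE.t x y z := by
    intro x y z
    have h := LE.alt (x + y) z
    simp only [map_add, LinearMap.add_apply, LE.alt, zero_add, add_zero] at h
    exact eq_neg_of_add_eq_zero_left (by rw [← h])
  have hL : ∀ a b c : E, LE.t a b c = LE.t c b a + LE.t a c b := by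
    intro a b c
    have h' : LE.t a b c + (LE.t b c a + LE.t c a b) = 0 := by
      rw [← add_assoc]; exact LE.cyc a b c
    rw [eq_neg_of_add_eq_zero_left h', hskew b c a, hskew c a b]
    abel
  have hs2' : ∀ x, s2 x = s1 x + i (φ x) := by
    intro x; rw [hφ x]; abel
  refine ⟨?_, ?_, ?_⟩
  · intro x y z
    apply iinj
    simp only [map_sub, map_add, Dmap, Drho, hω1, hω2, hθ1, hθ2, hρ1, hρ2, ihom, hs2',
      LinearMap.add_apply, LinearMap.sub_apply]
    rw [hL (s1 z) (i (φ y)) (i (φ x)),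
      hskew (s1 x) (i (φ y)) (s1 z),
      hskew (s1 x) (i (φ y)) (i (φ z)),
      hskew (i (φ x)) (i (φ y)) (s1 z),
      hskew (s1 y) (i (φ z)) (s1 x),
      hskew (i (φ y)) (i (φ z)) (s1 x),
      hskew (s1 y) (i (φ z)) (i (φ x)),
      hskew (s1 x) (i (φ z)) (s1 y),
      hskew (i (φ x)) (i (φ z)) (s1 y),
      hskew (s1 x) (i (φ z)) (i (φ y)),
      hL (s1 x) (i (φ z)) (s1 y),
      hL (i (φ x)) (i (φ z)) (s1 y),
      hL (s1 x) (i (φ z)) (i (φ y)),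
      hskew (i (φ x)) (s1 y) (i (φ z))]
    abel
  · intro x y a
    apply iinj
    simp only [map_sub, map_add, Dmap, Drho, hθ1, hθ2, hρ1, hρ2, ihom, hs2',
      LinearMap.add_apply, LinearMap.sub_apply]
    rw [hL (s1 y) (i a) (i (φ x)), hL (i (φ y)) (i a) (i (φ x)),
      hskew (i a) (s1 x) (i (φ y)), hskew (i a) (i (φ x)) (i (φ y)),
      hskew (i a) (i (φ x)) (s1 y)]
    abel
  · intro x a b
    apply iinj
    simp only [map_sub, map_add, Dmap, Drho, hρ1, hρ2, ihom, hs2',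
      LinearMap.add_apply, LinearMap.sub_apply]
    rw [hskew (i (φ x)) (i a) (i b)]
    abel
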